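/- arXiv:1610.01703 — 3 statements merged into one kernel-verified Lean document; each statement's English description precedes it below -/
import Mathlib

section
/- Let g be a probability density with ∫_ℝ ω g(ω) dω = 0 and [−m, m] ⊂ supp g ⊂ [−M, M], let K ≥ m, and suppose R^∞ ∈ (0, 1] satisfies the self-consistency relation R^∞ = ∫_ℝ g(ω) √(1 − (ω/(K R^∞))²) dω (in particular M ≤ K R^∞ so the integrand is real on supp g). Then R^∞ ≥ √(1 − (M/(K R^∞))²) and R^∞ ≥ m · min_{ω ∈ [−m,m]} g(ω). -/
open MeasureTheory Filter

/-- if `g` is a probability density with zero mean,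
`[−m,m] ⊆ supp g ⊆ [−M,M]`, `K ≥ m`, and `R^∞ ∈ (0,1]` satisfies the
self-consistency relation `R^∞ = ∫ g(ω) √(1 − (ω/(K R^∞))²) dω` (with
`M ≤ K R^∞`), then `R^∞ ≥ √(1 − (M/(K R^∞))²)` and
`R^∞ ≥ m · min_{ω ∈ [−m,m]} g(ω)`. -/
theorem stmt_9
    (g : ℝ → ℝ) (m M K RInf : ℝ)
    (hg_nonneg : ∀ ω, 0 ≤ g ω)
    (hg_prob : (∫ ω : ℝ, g ω) = 1)
    (hg_mean : (∫ ω : ℝ, ω * g ω) = 0)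
    (hsupp1 : Set.Icc (-m) m ⊆ Function.support g)
    (hsupp2 : Function.support g ⊆ Set.Icc (-M) M)
    (hK : m ≤ K)
    (hR1 : 0 < RInf) (hR2 : RInf ≤ 1)
    (hMKR : M ≤ K * RInf)
    (hsc : RInf = ∫ ω : ℝ, g ω * Real.sqrt (1 - (ω / (K * RInf)) ^ 2)) :
    Real.sqrt (1 - (M / (K * RInf)) ^ 2) ≤ RInf ∧
    m * sInf (g '' Set.Icc (-m) m) ≤ RInf := by
  set a := K * RInf with ha
  -- integrability of the two integrands
  have hint_gs : Integrable (fun ω : ℝ => g ω * Real.sqrt (1 - (ω / a) ^ 2)) := by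
    by_contra h
    rw [integral_undef h] at hsc
    exact absurd hsc (ne_of_gt hR1)
  have hint_g : Integrable g := by
    by_contra h
    rw [integral_undef h] at hg_prob
    norm_num at hg_prob
  -- positivity of a = K * RInf
  have ha_pos : 0 < a := by
    by_contra h
    push_neg at h
    have hM0 : M ≤ 0 := hMKR.trans h
    have hsupp0 : Function.support g ⊆ ({0} : Set ℝ) := by
      intro x hx
      obtain ⟨h1, h2⟩ := hsupp2 hx
      have : x = 0 := le_antisymm (h2.trans hM0) (by linarith)
      simpa using this
    have hae : g =ᵐ[volume] 0 := by
      rw [Filter.eventuallyEq_iff_exists_mem]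
      refine ⟨{x | g x = 0}, ?_, fun x hx => hx⟩
      rw [mem_ae_iff]
      refine measure_mono_null ?_ (measure_singleton (0 : ℝ))
      intro x hx
      exact hsupp0 hx
    rw [integral_congr_ae hae] at hg_prob
    simp at hg_prob
  -- nonneg of sqrt integrand
  have hs_nonneg : ∀ ω : ℝ, 0 ≤ g ω * Real.sqrt (1 - (ω / a) ^ 2) := fun ω =>
    mul_nonneg (hg_nonneg ω) (Real.sqrt_nonneg _)
  -- FIRST PART
  have part1 : Real.sqrt (1 - (M / a) ^ 2) ≤ RInf := by
    have hpt : ∀ ω : ℝ, g ω * Real.sqrt (1 - (M / a) ^ 2)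
        ≤ g ω * Real.sqrt (1 - (ω / a) ^ 2) := by
      intro ω
      rcases eq_or_ne (g ω) 0 with h0 | h0
      · simp [h0]
      · have hω : ω ∈ Set.Icc (-M) M := hsupp2 h0
        have hsq : ω ^ 2 ≤ M ^ 2 := sq_le_sq' hω.1 hω.2
        refine mul_le_mul_of_nonneg_left (Real.sqrt_le_sqrt ?_) (hg_nonneg ω)
        have : (ω / a) ^ 2 ≤ (M / a) ^ 2 := by
          rw [div_pow, div_pow]
          exact div_le_div_of_nonneg_right hsq (by positivity) |>.trans_eq rfl
        linarith
    have hmono : (∫ ω : ℝ, g ω * Real.sqrt (1 - (M / a) ^ 2))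
        ≤ ∫ ω : ℝ, g ω * Real.sqrt (1 - (ω / a) ^ 2) :=
      integral_mono (hint_g.mul_const _) hint_gs hpt
    rw [integral_mul_const, hg_prob, one_mul] at hmono
    linarith [hsc ▸ hmono]
  refine ⟨part1, ?_⟩
  -- SECOND PART
  set c0 := sInf (g '' Set.Icc (-m) m) with hc0
  have hc0_nonneg : 0 ≤ c0 := by
    apply Real.sInf_nonneg
    rintro x ⟨ω, _, rfl⟩
    exact hg_nonneg ω
  rcases le_or_gt m 0 with hm | hm
  · nlinarith
  -- now 0 < m
  have hmM : m ≤ M := by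
    have hmem : m ∈ Function.support g := hsupp1 ⟨by linarith, le_refl m⟩
    exact (hsupp2 hmem).2
  have hma : m ≤ a := hmM.trans hMKR
  have hc0_le : ∀ ω ∈ Set.Icc (-m) m, c0 ≤ g ω := by
    intro ω hω
    apply csInf_le
    · exact ⟨0, by rintro x ⟨ω', _, rfl⟩; exact hg_nonneg ω'⟩
    · exact ⟨ω, hω, rfl⟩
  -- pointwise lower bound on [-m, m]
  have hpt2 : ∀ ω ∈ Set.Icc (-m) m,
      c0 * (1 - ω ^ 2 / (a * m)) ≤ g ω * Real.sqrt (1 - (ω / a) ^ 2) := by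
    intro ω hω
    have hsqm : ω ^ 2 ≤ m ^ 2 := sq_le_sq' hω.1 hω.2
    have hpoly_nonneg : 0 ≤ 1 - ω ^ 2 / (a * m) := by
      rw [sub_nonneg, div_le_one (by positivity)]
      nlinarith
    have hsqrt : 1 - ω ^ 2 / (a * m) ≤ Real.sqrt (1 - (ω / a) ^ 2) := by
      rw [Real.le_sqrt hpoly_nonneg, div_pow]
      have hne1 : a * m ≠ 0 := by positivity
      have hne2 : (a:ℝ) ^ 2 ≠ 0 := by positivity
      rw [show 1 - ω ^ 2 / (a * m) = (a * m - ω ^ 2) / (a * m) by field_simp,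
        show 1 - ω ^ 2 / a ^ 2 = (a ^ 2 - ω ^ 2) / a ^ 2 by field_simp,
        div_pow, div_le_div_iff₀ (by positivity) (by positivity)]
      have hkey : ω ^ 2 + m ^ 2 ≤ 2 * (a * m) := by nlinarith
      have hkey2 : ω ^ 2 * (ω ^ 2 + m ^ 2) ≤ ω ^ 2 * (2 * (a * m)) :=
        mul_le_mul_of_nonneg_left hkey (sq_nonneg ω)
      nlinarith [mul_le_mul_of_nonneg_right hkey2 (sq_nonneg a)]
      rw [sub_nonneg, div_pow, div_le_one (by positivity)]
      nlinarith
    calc c0 * (1 - ω ^ 2 / (a * m)) ≤ g ω * (1 - ω ^ 2 / (a * m)) :=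
          mul_le_mul_of_nonneg_right (hc0_le ω hω) hpoly_nonneg
      _ ≤ g ω * Real.sqrt (1 - (ω / a) ^ 2) :=
          mul_le_mul_of_nonneg_left hsqrt (hg_nonneg ω)
  -- set integral comparisons
  have hstep1 : (∫ ω in Set.Icc (-m) m, g ω * Real.sqrt (1 - (ω / a) ^ 2)) ≤ RInf := by
    rw [hsc]
    exact setIntegral_le_integral hint_gs (Filter.Eventually.of_forall hs_nonneg)
  have hcont : Continuous fun ω : ℝ => c0 * (1 - ω ^ 2 / (a * m)) := by
    fun_prop
  have hstep2 : (∫ ω in Set.Icc (-m) m, c0 * (1 - ω ^ 2 / (a * m)))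
      ≤ ∫ ω in Set.Icc (-m) m, g ω * Real.sqrt (1 - (ω / a) ^ 2) :=
    setIntegral_mono_on (hcont.integrableOn_Icc) (hint_gs.integrableOn)
      measurableSet_Icc hpt2
  -- compute the polynomial integral
  have hcomp : (∫ ω in Set.Icc (-m) m, c0 * (1 - ω ^ 2 / (a * m)))
      = c0 * (2 * m - (2 * m ^ 3 / 3) / (a * m)) := by
    rw [integral_Icc_eq_integral_Ioc,
      ← intervalIntegral.integral_of_le (by linarith : -m ≤ m)]
    rw [intervalIntegral.integral_const_mul]
    congr 1
    have hsub : ∫ x in (-m)..m, (1 - x ^ 2 / (a * m))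
        = (∫ x in (-m)..m, (1:ℝ)) - ∫ x in (-m)..m, x ^ 2 / (a * m) := by
      apply intervalIntegral.integral_sub intervalIntegrable_const
      exact (intervalIntegral.intervalIntegrable_pow 2).div_const _
    rw [hsub, intervalIntegral.integral_div, integral_pow]
    simp
    ring
  have hfinal : m * c0 ≤ c0 * (2 * m - (2 * m ^ 3 / 3) / (a * m)) := by
    have hd : (2 * m ^ 3 / 3) / (a * m) = 2 * m ^ 2 / (3 * a) := by
      field_simp
    rw [hd]
    have : 2 * m ^ 2 / (3 * a) ≤ m := by
      rw [div_le_iff₀ (by positivity)]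
      nlinarith
    nlinarith
  linarith [hcomp ▸ (hstep2.trans hstep1)]
end

section
/- Let ε0 and γ0 be constants with 0 < ε0 < 3√3/4 − 1 and π/3 ≤ γ0 < arcsin(1 − 2ε0/(2√3 + 1)). Then (1 + ε0)/(1 + sin γ0) < ℳ*(ε0, γ0) < 1. -/
set_option maxHeartbeats 800000


/-- `ℳ*(ε₀,γ₀) := (2 + ε₀ + cos γ₀)/((1 + sin γ₀)(1 + cos γ₀))`. -/
noncomputable def massStar (ε₀ γ₀ : ℝ) : ℝ :=
  (2 + ε₀ + Real.cos γ₀) / ((1 + Real.sin γ₀) * (1 + Real.cos γ₀))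

/-- for `0 < ε₀ < 3√3/4 − 1` and `π/3 ≤ γ₀ < arcsin(1 − 2ε₀/(2√3 + 1))`,
one has `(1 + ε₀)/(1 + sin γ₀) < ℳ*(ε₀, γ₀) < 1`. -/
theorem stmt_11 (ε₀ γ₀ : ℝ)
    (hε₀ : 0 < ε₀) (hε₀' : ε₀ < 3 * Real.sqrt 3 / 4 - 1)
    (hγ₀ : Real.pi / 3 ≤ γ₀)
    (hγ₀' : γ₀ < Real.arcsin (1 - 2 * ε₀ / (2 * Real.sqrt 3 + 1))) :
    (1 + ε₀) / (1 + Real.sin γ₀) < massStar ε₀ γ₀ ∧ massStar ε₀ γ₀ < 1 := by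
  set r := Real.sqrt 3 with hrdef
  have hr2 : r ^ 2 = 3 := Real.sq_sqrt (by norm_num)
  have hr0 : (0:ℝ) ≤ r := Real.sqrt_nonneg 3
  have hr1 : (1.7:ℝ) < r := by nlinarith
  have hrlt : r < 2 := by nlinarith
  have hεhalf : ε₀ < 1/2 := by nlinarith
  -- x := 1 - 2ε₀/(2r+1) ∈ (0,1)
  set x : ℝ := 1 - 2 * ε₀ / (2 * r + 1) with hxdef
  have hden : (0:ℝ) < 2 * r + 1 := by linarith
  have hx1 : x < 1 := by
    have : 0 < 2 * ε₀ / (2 * r + 1) := by positivity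
    simp [hxdef]; linarith
  have hx0 : 0 < x := by
    have h1 : 2 * ε₀ / (2 * r + 1) < 1 := by
      rw [div_lt_one hden]; linarith
    simp [hxdef]; linarith
  have hxm : -1 ≤ x := by linarith
  have hxM : x ≤ 1 := le_of_lt hx1
  -- γ₀ bounds
  have hπ : (0:ℝ) < Real.pi := Real.pi_pos
  have hγhi : γ₀ < Real.pi / 2 :=
    lt_of_lt_of_le hγ₀' (Real.arcsin_le_pi_div_two x)
  have hγlo : -(Real.pi / 2) ≤ γ₀ := by linarith
  -- s and c
  set s := Real.sin γ₀ with hsdef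
  set c := Real.cos γ₀ with hcdef
  have hsc : s ^ 2 + c ^ 2 = 1 := Real.sin_sq_add_cos_sq γ₀
  have hc0 : 0 < c := Real.cos_pos_of_mem_Ioo ⟨by linarith, hγhi⟩
  have hc1 : c ≤ 1 := Real.cos_le_one γ₀
  -- s ≥ √3/2
  have hsge : r / 2 ≤ s := by
    have := Real.sin_pi_div_three
    calc r / 2 = Real.sin (Real.pi / 3) := by rw [Real.sin_pi_div_three]
      _ ≤ s := by
        apply Real.strictMonoOn_sin.monotoneOn ?_ ?_ hγ₀
        · constructor <;> [linarith; linarith]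
        · exact ⟨hγlo, le_of_lt hγhi⟩
  -- s < x
  have hslt : s < x := by
    have harc := Real.arcsin_mem_Icc x
    have : s < Real.sin (Real.arcsin x) := by
      apply Real.strictMonoOn_sin ⟨hγlo, le_of_lt hγhi⟩ ⟨harc.1, harc.2⟩ hγ₀'
    rwa [Real.sin_arcsin hxm hxM] at this
  have hs1 : s < 1 := lt_of_lt_of_le hslt hxM
  have hs0 : 0 < s := by nlinarith
  -- ε₀ < (2r+1)(1-s)/2
  have hkey1 : ε₀ < (2 * r + 1) * (1 - s) / 2 := by
    have : 2 * ε₀ / (2 * r + 1) < 1 - s := by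
      simp only [hxdef] at hslt; linarith
    rw [div_lt_iff₀ hden] at this
    nlinarith
  -- key: s*c ≥ (1-s)(2r+3)/2
  have hkey2 : (1 - s) * (2 * r + 3) / 2 ≤ s * c := by
    have hsq : ((1 - s) * (2 * r + 3) / 2) ^ 2 ≤ (s * c) ^ 2 := by
      have hcsq : c ^ 2 = 1 - s ^ 2 := by linarith
      have hp : 0 ≤ s ^ 2 * (1 + s) - (1 - s) * (21 + 12 * r) / 4 := by
        have hA : 0 ≤ s - r / 2 := by linarith
        have hB : 0 ≤ s ^ 2 + (r / 2 + 1) * s + 6 + 7 * r / 2 := by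
          nlinarith [mul_nonneg hr0 hs0.le, sq_nonneg s]
        have hid : s ^ 2 * (1 + s) - (1 - s) * (21 + 12 * r) / 4
            = (s - r / 2) * (s ^ 2 + (r / 2 + 1) * s + 6 + 7 * r / 2)
              + (r ^ 2 - 3) * (s + 7) / 4 := by ring
        rw [hid, hr2]
        nlinarith [mul_nonneg hA hB]
      nlinarith [sq_nonneg (1 - s)]
    have hrhs : 0 ≤ (1 - s) * (2 * r + 3) / 2 := by
      have : 0 ≤ 1 - s := by linarith
      positivity
    have hlhs : 0 ≤ s * c := by positivity
    nlinarith
  -- final key: ε₀ < s*(1+c) - 1, i.e. ε₀ < s + s*c - 1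
  have hfin : ε₀ < s + s * c - 1 := by nlinarith
  have hd1 : 0 < 1 + s := by linarith
  have hd2 : 0 < (1 + s) * (1 + c) := by positivity
  constructor
  · rw [massStar, div_lt_div_iff₀ hd1 hd2]
    have : ε₀ * c < 1 := by nlinarith
    nlinarith
  · rw [massStar, div_lt_one hd2]
    have hexp : (1 + s) * (1 + c) = 1 + s + c + s * c := by ring
    rw [hexp]; linarith
end

section
/- Let f be a C¹ solution of the Kuramoto–Sakaguchi equation with supp g ⊂ [−M, M] and ‖f0‖_{L∞} < ∞. Then ‖f(·,·,t)‖_{L∞(𝕋×[−M,M])} ≤ ‖f0‖_{L∞} e^{Kt} for all t ∈ [0, ∞). -/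
open MeasureTheory Filter

/-- for a `C¹` solution `f` of the Kuramoto–Sakaguchi equation with
`supp g ⊆ [−M,M]` and bounded initial datum (`|f₀| ≤ C`), one has
`‖f(t)‖_{L∞(𝕋×[−M,M])} ≤ ‖f₀‖_{L∞} e^{Kt}` for all `t ≥ 0`. -/
theorem stmt_13
    (K M : ℝ) (hK : 0 < K)
    (f : ℝ → ℝ → ℝ → ℝ) (g : ℝ → ℝ) (R φ : ℝ → ℝ)
    (hreg : ContDiff ℝ 1 (fun p : ℝ × ℝ × ℝ => f p.1 p.2.1 p.2.2))
    (hper : ∀ θ ω t, f (θ + 2 * Real.pi) ω t = f θ ω t)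
    (hpos : ∀ θ ω t, 0 ≤ f θ ω t)
    (hprob : ∀ t, (∫ ω : ℝ, ∫ θ in (0 : ℝ)..(2 * Real.pi), f θ ω t) = 1)
    (hgdef : ∀ ω t, (∫ θ in (0 : ℝ)..(2 * Real.pi), f θ ω t) = g ω)
    (hPDE : ∀ θ ω t,
      deriv (fun s => f θ ω s) t +
        deriv (fun x =>
          (ω - K * ∫ ω' : ℝ, ∫ y in (0 : ℝ)..(2 * Real.pi), Real.sin (x - y) * f y ω' t)
            * f x ω t) θ = 0)
    (hRnn : ∀ t, 0 ≤ R t)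
    (hRcos : ∀ t, R t * Real.cos (φ t)
      = ∫ ω : ℝ, ∫ θ in (0 : ℝ)..(2 * Real.pi), Real.cos θ * f θ ω t)
    (hRsin : ∀ t, R t * Real.sin (φ t)
      = ∫ ω : ℝ, ∫ θ in (0 : ℝ)..(2 * Real.pi), Real.sin θ * f θ ω t)
    (hsupp : ∀ ω, ω ∉ Set.Icc (-M) M → g ω = 0)
    (C : ℝ) (hC : ∀ θ ω, |f θ ω 0| ≤ C) :
    ∀ t, 0 ≤ t → ∀ θ ω, ω ∈ Set.Icc (-M) M →
      |f θ ω t| ≤ C * Real.exp (K * t) := by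
  intro t0 ht0 θ0 ω0 hω0
  have hfc : Continuous (fun p : ℝ × ℝ × ℝ => f p.1 p.2.1 p.2.2) := hreg.continuous
  have hfd : Differentiable ℝ (fun p : ℝ × ℝ × ℝ => f p.1 p.2.1 p.2.2) := hreg.differentiable one_ne_zero
  have hcθ : ∀ ω t, Continuous fun θ => f θ ω t := by intro ω t; fun_prop
  have hct : ∀ θ ω, Continuous fun t => f θ ω t := by intro θ ω; fun_prop
  have hπ : (0:ℝ) < 2 * Real.pi := by positivity
  -- periodicity for integer multiples
  have hper' : ∀ (k : ℤ) θ ω t, f (θ + 2 * Real.pi * k) ω t = f θ ω t := by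
    intro k
    induction k using Int.induction_on with
    | zero => intro θ ω t; simp
    | succ n ih =>
        intro θ ω t
        have : θ + 2 * Real.pi * ((n : ℤ) + 1 : ℤ) = (θ + 2 * Real.pi * (n : ℤ)) + 2 * Real.pi := by
          push_cast; ring
        rw [this, hper, ih]
    | pred n ih =>
        intro θ ω t
        have : (θ + 2 * Real.pi * (-(n : ℤ) - 1 : ℤ)) + 2 * Real.pi = θ + 2 * Real.pi * (-(n : ℤ) : ℤ) := by
          push_cast; ring
        rw [← ih θ ω t, ← this, hper]
  -- reduction mod 2π
  have hred : ∀ θ : ℝ, ∃ θ' ∈ Set.Icc (0:ℝ) (2 * Real.pi), ∀ ω t, f θ' ω t = f θ ω t := by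
    intro θ
    refine ⟨θ - 2 * Real.pi * ⌊θ / (2 * Real.pi)⌋, ⟨?_, ?_⟩, ?_⟩
    · have h1 : (⌊θ / (2 * Real.pi)⌋ : ℝ) * (2 * Real.pi) ≤ (θ / (2 * Real.pi)) * (2 * Real.pi) :=
        mul_le_mul_of_nonneg_right (Int.floor_le _) hπ.le
      have h2 : θ / (2 * Real.pi) * (2 * Real.pi) = θ := div_mul_cancel₀ _ hπ.ne'
      rw [h2] at h1
      linarith
    · have h1 : (θ / (2 * Real.pi)) * (2 * Real.pi) ≤ ((⌊θ / (2 * Real.pi)⌋ : ℝ) + 1) * (2 * Real.pi) :=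
        mul_le_mul_of_nonneg_right (Int.lt_floor_add_one _).le hπ.le
      have h2 : θ / (2 * Real.pi) * (2 * Real.pi) = θ := div_mul_cancel₀ _ hπ.ne'
      rw [h2] at h1
      linarith
    · intro ω t
      have := hper' ⌊θ / (2 * Real.pi)⌋ (θ - 2 * Real.pi * ⌊θ / (2 * Real.pi)⌋) ω t
      simpa using this.symm
  -- continuity and integrability of g
  have hgc : Continuous g := by
    have : Continuous fun ω => ∫ y in (0:ℝ)..(2*Real.pi), f y ω 0 := by
      apply intervalIntegral.continuous_parametric_intervalIntegral_of_continuous'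
      show Continuous (Function.uncurry fun (ω y : ℝ) => f y ω 0); fun_prop
    have he : (fun ω => ∫ y in (0:ℝ)..(2*Real.pi), f y ω 0) = g := by
      funext ω; exact hgdef ω 0
    rwa [he] at this
  have hgnn : ∀ ω, 0 ≤ g ω := by
    intro ω
    rw [← hgdef ω 0]
    exact intervalIntegral.integral_nonneg hπ.le (fun y _ => hpos y ω 0)
  have hgint : Integrable g := by
    apply hgc.integrable_of_hasCompactSupport
    exact HasCompactSupport.intro isCompact_Icc hsupp
  have hgone : (∫ ω, g ω) = 1 := by
    rw [← hprob 0]; congr 1; funext ω; rw [hgdef ω 0]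
  have hCnn : 0 ≤ C := le_trans (abs_nonneg _) (hC 0 0)
  rw [abs_of_nonneg (hpos _ _ _)]
  -- reduce to ε-version
  have main : ∀ ε : ℝ, 0 < ε → f θ0 ω0 t0 ≤ (C + ε) * Real.exp ((K + ε) * t0) := by
    intro ε hε
    set ψ : ℝ → ℝ := fun t => (C + ε) * Real.exp ((K + ε) * t) with hψdef
    have hψpos : ∀ t, 0 < ψ t := fun t => by positivity
    have hψc : Continuous ψ := by fun_prop
    by_contra hcon
    push_neg at hcon
    -- the "bad" set
    set Z : Set ((ℝ × ℝ) × ℝ) := {p | p.1.1 ∈ Set.Icc (0:ℝ) (2*Real.pi) ∧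
      p.1.2 ∈ Set.Icc (-M) M ∧ p.2 ∈ Set.Icc 0 t0 ∧ ψ p.2 ≤ f p.1.1 p.1.2 p.2} with hZdef
    have hZc : IsClosed Z := by
      apply IsClosed.inter
      · exact isClosed_Icc.preimage (by fun_prop)
      apply IsClosed.inter
      · exact isClosed_Icc.preimage (by fun_prop)
      apply IsClosed.inter
      · exact isClosed_Icc.preimage (by fun_prop)
      · exact isClosed_le (hψc.comp continuous_snd) (by fun_prop)
    have hZcp : IsCompact Z := by
      apply IsCompact.of_isClosed_subset
        ((isCompact_Icc.prod isCompact_Icc).prod isCompact_Icc) hZc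
      rintro ⟨⟨a, b⟩, c⟩ ⟨h1, h2, h3, _⟩
      exact ⟨⟨h1, h2⟩, h3⟩
    have hZne : Z.Nonempty := by
      obtain ⟨θ0', hθ0'mem, hθ0'⟩ := hred θ0
      exact ⟨((θ0', ω0), t0), hθ0'mem, hω0, ⟨ht0, le_rfl⟩, by rw [hθ0']; exact hcon.le⟩
    set S : Set ℝ := Prod.snd '' Z with hSdef
    have hScp : IsCompact S := hZcp.image continuous_snd
    have hSne : S.Nonempty := hZne.image _
    set ts : ℝ := sInf S with htsdef
    have htsS : ts ∈ S := hScp.sInf_mem hSne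
    obtain ⟨⟨⟨θs, ωs⟩, tv⟩, hZmem, htv⟩ := htsS
    obtain ⟨hθs, hωs, htsIcc, hfψ⟩ := hZmem
    simp only at hθs hωs htsIcc hfψ htv
    subst htv
    have hlb : ∀ t ∈ S, ts ≤ t := fun t ht => csInf_le hScp.bddBelow ht
    have hts0 : 0 < ts := by
      rcases lt_or_eq_of_le htsIcc.1 with h | h
      · exact h
      · exfalso
        have h0 : f θs ωs 0 ≤ C := (le_abs_self _).trans (hC θs ωs)
        have : ψ 0 = C + ε := by simp [hψdef]
        rw [← h] at hfψ
        rw [this] at hfψ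
        linarith
    -- no bad point strictly before ts
    have hbefore : ∀ θ ω, ω ∈ Set.Icc (-M) M → ∀ t, 0 ≤ t → t < ts → f θ ω t < ψ t := by
      intro θ ω hω t ht1 ht2
      by_contra hcon2
      push_neg at hcon2
      obtain ⟨θ', hθ'mem, hθ'⟩ := hred θ
      have : t ∈ S := ⟨((θ', ω), t), ⟨hθ'mem, hω, ⟨ht1, ht2.le.trans htsIcc.2⟩,
        by rw [hθ']; exact hcon2⟩, rfl⟩
      exact absurd (hlb t this) (not_le.mpr ht2)
    -- at time ts, everything is ≤ ψ ts
    have hle_star : ∀ θ ω, ω ∈ Set.Icc (-M) M → f θ ω ts ≤ ψ ts := by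
      intro θ ω hω
      by_contra hcon2
      push_neg at hcon2
      obtain ⟨θ', hθ'mem, hθ'⟩ := hred θ
      have hcont : Continuous fun t => f θ' ω t - ψ t := (hct θ' ω).sub hψc
      have hpos' : 0 < f θ' ω ts - ψ ts := by rw [hθ']; linarith
      have hev : ∀ᶠ t in nhds ts, 0 < f θ' ω t - ψ t :=
        (hcont.tendsto ts).eventually_const_lt hpos'
      have hev2 : ∀ᶠ t in nhdsWithin ts (Set.Iio ts), t ∈ Set.Ioo 0 ts :=
        Ioo_mem_nhdsLT_of_mem ⟨hts0, le_rfl⟩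
      have : ∀ᶠ t in nhdsWithin ts (Set.Iio ts), False := by
        filter_upwards [hev.filter_mono nhdsWithin_le_nhds, hev2] with t h1 h2
        have := hbefore θ' ω hω t h2.1.le h2.2
        linarith
      exact this.exists.choose_spec
    have heq : f θs ωs ts = ψ ts := le_antisymm (hle_star θs ωs hωs) hfψ
    -- θ-derivative vanishes at the max
    have hmax : ∀ θ, f θ ωs ts ≤ f θs ωs ts := by
      intro θ; rw [heq]; exact hle_star θ ωs hωs
    have hdθ : deriv (fun x => f x ωs ts) θs = 0 := by
      have : IsLocalMax (fun x => f x ωs ts) θs := Filter.Eventually.of_forall hmax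
      exact this.deriv_eq_zero
    -- time derivative of f at (θs, ωs, ts)
    have hdiff_t : DifferentiableAt ℝ (fun s => f θs ωs s) ts := by
      have : (fun s => f θs ωs s)
          = (fun p : ℝ × ℝ × ℝ => f p.1 p.2.1 p.2.2) ∘ (fun s => (θs, ωs, s)) := rfl
      rw [this]; exact (hfd _).comp _ (by fun_prop)
    have hdiff_θ : DifferentiableAt ℝ (fun x => f x ωs ts) θs := by
      have : (fun x => f x ωs ts)
          = (fun p : ℝ × ℝ × ℝ => f p.1 p.2.1 p.2.2) ∘ (fun x => (x, ωs, ts)) := rfl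
      rw [this]; exact (hfd _).comp _ (by fun_prop)
    have hψd : HasDerivAt ψ ((K + ε) * ψ ts) ts := by
      have h1 : HasDerivAt (fun t : ℝ => (K + ε) * t) (K + ε) ts := by
        simpa using (hasDerivAt_id ts).const_mul (K + ε)
      have h2 := (h1.exp).const_mul (C + ε)
      exact h2.congr_deriv (by show _ = (K + ε) * ((C + ε) * Real.exp ((K + ε) * ts)); ring)
    -- the derivative of f in time at (θs,ωs,ts) is at least (K+ε) ψ ts
    have hderiv_ge : (K + ε) * ψ ts ≤ deriv (fun s => f θs ωs s) ts := by
      set D := deriv (fun s => f θs ωs s) ts with hD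
      have hu : HasDerivAt (fun s => f θs ωs s - ψ s) (D - (K + ε) * ψ ts) ts :=
        (hdiff_t.hasDerivAt).sub hψd
      have hslope := hasDerivAt_iff_tendsto_slope.mp hu
      have hslope' : Tendsto (slope (fun s => f θs ωs s - ψ s) ts)
          (nhdsWithin ts (Set.Iio ts)) (nhds (D - (K + ε) * ψ ts)) :=
        hslope.mono_left (nhdsWithin_mono _ (fun x hx => Set.mem_compl_singleton_iff.mpr (ne_of_lt hx)))
      have hev : ∀ᶠ t in nhdsWithin ts (Set.Iio ts),
          0 ≤ slope (fun s => f θs ωs s - ψ s) ts t := by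
        filter_upwards [Ioo_mem_nhdsLT_of_mem (Set.mem_Ioc.mpr ⟨hts0, le_rfl⟩)] with t ht
        have h1 : f θs ωs t - ψ t ≤ 0 := by
          have := hbefore θs ωs hωs t ht.1.le ht.2; linarith
        have h2 : f θs ωs ts - ψ ts = 0 := by rw [heq]; ring
        rw [slope_def_field]
        simp only [h2, sub_zero]
        rw [div_nonneg_iff]
        right
        constructor
        · linarith
        · linarith [ht.2]
      have := ge_of_tendsto hslope' hev
      linarith
    -- rewrite the velocity integral
    set A : ℝ := ∫ ω' : ℝ, ∫ y in (0:ℝ)..(2*Real.pi), Real.cos y * f y ω' ts with hA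
    set B : ℝ := ∫ ω' : ℝ, ∫ y in (0:ℝ)..(2*Real.pi), Real.sin y * f y ω' ts with hB
    -- generic facts about weighted integrals
    have key : ∀ c : ℝ → ℝ, Continuous c → (∀ y, |c y| ≤ 1) →
        Integrable (fun ω => ∫ y in (0:ℝ)..(2*Real.pi), c y * f y ω ts) ∧
        (∫ ω : ℝ, ∫ y in (0:ℝ)..(2*Real.pi), c y * f y ω ts) ≤ 1 := by
      intro c hc hc1
      set U : ℝ → ℝ := fun ω => ∫ y in (0:ℝ)..(2*Real.pi), c y * f y ω ts with hU
      have hUc : Continuous U := by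
        apply intervalIntegral.continuous_parametric_intervalIntegral_of_continuous'
        show Continuous (Function.uncurry fun (ω y : ℝ) => c y * f y ω ts); fun_prop
      have hUle : ∀ ω, U ω ≤ g ω := by
        intro ω
        rw [← hgdef ω ts]
        apply intervalIntegral.integral_mono_on hπ.le
        · exact ((hc.mul (by fun_prop)).intervalIntegrable _ _)
        · exact ((hcθ ω ts).intervalIntegrable _ _)
        · intro y _
          nlinarith [hpos y ω ts, abs_le.mp (hc1 y), hpos y ω ts]
      have hUge : ∀ ω, -g ω ≤ U ω := by
        intro ω
        rw [← hgdef ω ts]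
        have : (∫ y in (0:ℝ)..(2*Real.pi), -(f y ω ts)) = -∫ y in (0:ℝ)..(2*Real.pi), f y ω ts := by
          rw [intervalIntegral.integral_neg]
        rw [← this]
        apply intervalIntegral.integral_mono_on hπ.le
        · exact (((hcθ ω ts).neg).intervalIntegrable _ _)
        · exact ((hc.mul (by fun_prop)).intervalIntegrable _ _)
        · intro y _
          nlinarith [hpos y ω ts, abs_le.mp (hc1 y)]
      have hUzero : ∀ ω, ω ∉ Set.Icc (-M) M → U ω = 0 := by
        intro ω hω
        have h1 := hUle ω
        have h2 := hUge ω
        rw [hsupp ω hω] at h1 h2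
        linarith
      have hUint : Integrable U :=
        hUc.integrable_of_hasCompactSupport (HasCompactSupport.intro isCompact_Icc hUzero)
      refine ⟨hUint, ?_⟩
      calc (∫ ω, U ω) ≤ ∫ ω, g ω := integral_mono hUint hgint hUle
        _ = 1 := hgone
    obtain ⟨hUcos_int, -⟩ := key Real.cos Real.continuous_cos (fun y => Real.abs_cos_le_one y)
    obtain ⟨hUsin_int, -⟩ := key Real.sin Real.continuous_sin (fun y => Real.abs_sin_le_one y)
    -- the key bound
    have hABbound : Real.cos θs * A + Real.sin θs * B ≤ 1 := by
      obtain ⟨hcint, hcbd⟩ := key (fun y => Real.cos (y - θs))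
        (by fun_prop) (fun y => Real.abs_cos_le_one _)
      have hrw : (∫ ω : ℝ, ∫ y in (0:ℝ)..(2*Real.pi), Real.cos (y - θs) * f y ω ts)
          = Real.cos θs * A + Real.sin θs * B := by
        have inner : ∀ ω : ℝ, (∫ y in (0:ℝ)..(2*Real.pi), Real.cos (y - θs) * f y ω ts)
            = Real.cos θs * (∫ y in (0:ℝ)..(2*Real.pi), Real.cos y * f y ω ts)
              + Real.sin θs * (∫ y in (0:ℝ)..(2*Real.pi), Real.sin y * f y ω ts) := by
          intro ω
          rw [← intervalIntegral.integral_const_mul, ← intervalIntegral.integral_const_mul,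
            ← intervalIntegral.integral_add (f := fun y => Real.cos θs * (Real.cos y * f y ω ts))
              (g := fun y => Real.sin θs * (Real.sin y * f y ω ts))
              ((continuous_const.mul (Real.continuous_cos.mul (hcθ ω ts))).intervalIntegrable _ _)
              ((continuous_const.mul (Real.continuous_sin.mul (hcθ ω ts))).intervalIntegrable _ _)]
          apply intervalIntegral.integral_congr
          intro y _
          simp only [Real.cos_sub]
          ring
        calc (∫ ω : ℝ, ∫ y in (0:ℝ)..(2*Real.pi), Real.cos (y - θs) * f y ω ts)
            = ∫ ω : ℝ, (Real.cos θs * (∫ y in (0:ℝ)..(2*Real.pi), Real.cos y * f y ω ts)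
              + Real.sin θs * (∫ y in (0:ℝ)..(2*Real.pi), Real.sin y * f y ω ts)) := by
              congr 1; funext ω; exact inner ω
          _ = Real.cos θs * A + Real.sin θs * B := by
              rw [integral_add (hUcos_int.const_mul _) (hUsin_int.const_mul _),
                integral_const_mul, integral_const_mul]
      rw [hrw] at hcbd
      exact hcbd
    -- rewrite the transport term
    have hSrw : ∀ x : ℝ, (∫ ω' : ℝ, ∫ y in (0:ℝ)..(2*Real.pi), Real.sin (x - y) * f y ω' ts)
        = Real.sin x * A - Real.cos x * B := by
      intro x
      have inner : ∀ ω : ℝ, (∫ y in (0:ℝ)..(2*Real.pi), Real.sin (x - y) * f y ω ts)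
          = Real.sin x * (∫ y in (0:ℝ)..(2*Real.pi), Real.cos y * f y ω ts)
            - Real.cos x * (∫ y in (0:ℝ)..(2*Real.pi), Real.sin y * f y ω ts) := by
        intro ω
        rw [← intervalIntegral.integral_const_mul, ← intervalIntegral.integral_const_mul,
          ← intervalIntegral.integral_sub (f := fun y => Real.sin x * (Real.cos y * f y ω ts))
            (g := fun y => Real.cos x * (Real.sin y * f y ω ts))
            ((continuous_const.mul (Real.continuous_cos.mul (hcθ ω ts))).intervalIntegrable _ _)
            ((continuous_const.mul (Real.continuous_sin.mul (hcθ ω ts))).intervalIntegrable _ _)]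
        apply intervalIntegral.integral_congr
        intro y _
        simp only [Real.sin_sub]
        ring
      calc (∫ ω : ℝ, ∫ y in (0:ℝ)..(2*Real.pi), Real.sin (x - y) * f y ω ts)
          = ∫ ω : ℝ, (Real.sin x * (∫ y in (0:ℝ)..(2*Real.pi), Real.cos y * f y ω ts)
            - Real.cos x * (∫ y in (0:ℝ)..(2*Real.pi), Real.sin y * f y ω ts)) := by
            congr 1; funext ω; exact inner ω
        _ = Real.sin x * A - Real.cos x * B := by
            rw [integral_sub (hUcos_int.const_mul _) (hUsin_int.const_mul _),
              integral_const_mul, integral_const_mul]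
    -- compute the θ-derivative of the flux at θs
    have hflux : deriv (fun x =>
        (ωs - K * ∫ ω' : ℝ, ∫ y in (0 : ℝ)..(2 * Real.pi), Real.sin (x - y) * f y ω' ts)
          * f x ωs ts) θs = -(K * (Real.cos θs * A + Real.sin θs * B)) * ψ ts := by
      have hfe : (fun x =>
          (ωs - K * ∫ ω' : ℝ, ∫ y in (0 : ℝ)..(2 * Real.pi), Real.sin (x - y) * f y ω' ts)
            * f x ωs ts)
          = fun x => (ωs - K * (Real.sin x * A - Real.cos x * B)) * f x ωs ts := by
        funext x; rw [hSrw x]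
      rw [hfe]
      have hv : HasDerivAt (fun x => ωs - K * (Real.sin x * A - Real.cos x * B))
          (-(K * (Real.cos θs * A + Real.sin θs * B))) θs := by
        have h1 : HasDerivAt (fun x => Real.sin x * A - Real.cos x * B)
            (Real.cos θs * A + Real.sin θs * B) θs := by
          have := ((Real.hasDerivAt_sin θs).mul_const A).sub ((Real.hasDerivAt_cos θs).mul_const B)
          exact this.congr_deriv (by ring)
        have := (h1.const_mul K).const_sub ωs
        convert this using 1 <;> ring
      have hf' : HasDerivAt (fun x => f x ωs ts) 0 θs := by
        have := hdiff_θ.hasDerivAt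
        rwa [hdθ] at this
      have := hv.mul hf'
      rw [HasDerivAt.deriv (f := fun x => (ωs - K * (Real.sin x * A - Real.cos x * B)) * f x ωs ts) this]
      rw [mul_zero, add_zero, heq]
    -- combine with the PDE
    have hPDE' := hPDE θs ωs ts
    rw [hflux] at hPDE'
    have hdt : deriv (fun s => f θs ωs s) ts = K * (Real.cos θs * A + Real.sin θs * B) * ψ ts := by
      linarith
    rw [hdt] at hderiv_ge
    nlinarith [mul_pos hε (hψpos ts), mul_nonneg (mul_nonneg hK.le (sub_nonneg.mpr hABbound)) (hψpos ts).le]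
  -- take the limit ε → 0⁺
  have hlim : Tendsto (fun ε : ℝ => (C + ε) * Real.exp ((K + ε) * t0))
      (nhdsWithin 0 (Set.Ioi 0)) (nhds (C * Real.exp (K * t0))) := by
    have hcont : Continuous fun ε : ℝ => (C + ε) * Real.exp ((K + ε) * t0) := by fun_prop
    have h2 : Tendsto (fun ε : ℝ => (C + ε) * Real.exp ((K + ε) * t0))
        (nhdsWithin 0 (Set.Ioi 0)) (nhds ((C + 0) * Real.exp ((K + 0) * t0))) :=
      (hcont.tendsto 0).mono_left nhdsWithin_le_nhds
    simpa using h2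
  exact ge_of_tendsto hlim (eventually_nhdsWithin_of_forall fun ε hε => main ε hε)
end
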